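/- Let f be an expansive homeomorphism with the periodic gluing orbit property of a compact metric space and h a commuting homeomorphism preserving the periodic orbits of f, with h(p) = f^{n(p)}(p) for each periodic p where n(p) ∈ ℤ ∩ (−π(p)/2, π(p)/2]. If the function n(·) is bounded on the set of periodic points, then h = f^k for some integer k. -/

import Mathlib

open Function Set Filter Topology Metric

variable {X : Type*} [MetricSpace X] [CompactSpace X]

/-- The `n`-th iterate (`n ∈ ℤ`) of a homeomorphism `f`. -/
def zpowIter (f : X ≃ₜ X) (n : ℤ) : X → X := ⇑(f.toEquiv ^ n : Equiv.Perm X)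

/-- `x` is a periodic point of `f`. -/
def IsPer (f : X ≃ₜ X) (x : X) : Prop := ∃ n : ℕ, 0 < n ∧ (⇑f)^[n] x = x

/-- The full (two-sided) orbit of `x` under `f`. -/
def zOrbit (f : X ≃ₜ X) (x : X) : Set X := {y | ∃ n : ℤ, zpowIter f n x = y}

/-- `f` is expansive: some `ε > 0` separates any two distinct orbits. -/
def Expansive (f : X ≃ₜ X) : Prop :=
  ∃ e : ℝ, 0 < e ∧ ∀ x y : X, x ≠ y → ∃ n : ℤ, e < dist (zpowIter f n x) (zpowIter f n y)

/-- The periodic gluing orbit property: any finite collection of orbit segments can be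
`ε`-shadowed by a single periodic orbit, with gap times bounded by `K(ε)`. -/
def PeriodicGluing (f : X ≃ₜ X) : Prop :=
  ∀ e : ℝ, 0 < e → ∃ K : ℕ, 0 < K ∧
    ∀ (k : ℕ) (x : ℕ → X) (n : ℕ → ℕ), (∀ i, i ≤ k → 1 ≤ n i) →
      ∃ (p : ℕ → ℕ) (z : X),
        (∀ i, i ≤ k → 1 ≤ p i ∧ p i ≤ K) ∧
        (∀ i, i ≤ k → ∀ j, j ≤ n i →
          dist ((⇑f)^[j + ∑ l ∈ Finset.range i, (n l + p l)] z) ((⇑f)^[j] (x i)) < e) ∧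
        (⇑f)^[∑ l ∈ Finset.range (k + 1), (n l + p l)] z = z

/-! ### Auxiliary lemmas -/

lemma zpi_add (f : X ≃ₜ X) (a b : ℤ) (x : X) :
    zpowIter f (a + b) x = zpowIter f a (zpowIter f b x) := by
  simp [zpowIter, zpow_add]

lemma zpi_congr (f : X ≃ₜ X) {a b : ℤ} (hab : a = b) (x : X) :
    zpowIter f a x = zpowIter f b x := by rw [hab]

lemma zpi_natCast (f : X ≃ₜ X) (m : ℕ) (x : X) :
    zpowIter f (m : ℤ) x = (⇑f)^[m] x := by
  simp only [zpowIter, zpow_natCast, Equiv.Perm.coe_pow]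
  rfl

lemma zpi_zero (f : X ≃ₜ X) (x : X) : zpowIter f 0 x = x := by
  simp [zpowIter]

lemma zpi_neg_fixed (f : X ≃ₜ X) {c : ℤ} {x : X} (hx : zpowIter f c x = x) :
    zpowIter f (-c) x = x := by
  conv_lhs => rw [← hx, ← zpi_add, neg_add_cancel, zpi_zero]

lemma zpi_mul_fixed (f : X ≃ₜ X) {c : ℤ} {x : X} (hx : zpowIter f c x = x) (t : ℤ) :
    zpowIter f (c * t) x = x := by
  induction t using Int.induction_on with
  | zero => simpa using zpi_zero f x
  | succ k ih =>
      have h1 : c * ((k : ℤ) + 1) = c + c * k := by ring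
      rw [h1, zpi_add, ih, hx]
  | pred k ih =>
      have h1 : c * (-(k : ℤ) - 1) = -c + c * (-k) := by ring
      rw [h1, zpi_add, ih, zpi_neg_fixed f hx]

lemma zpi_emod (f : X ≃ₜ X) {P : ℕ} (hP : 0 < P) {x : X} (hx : (⇑f)^[P] x = x) (n : ℤ) :
    zpowIter f n x = (⇑f)^[(n % (P : ℤ)).toNat] x := by
  have hPfix : zpowIter f (P : ℤ) x = x := by rw [zpi_natCast]; exact hx
  have h1 : n = n % (P : ℤ) + (P : ℤ) * (n / (P : ℤ)) := by
    rw [add_comm]; exact (Int.mul_ediv_add_emod n (P : ℤ)).symm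
  have h2 : ((n % (P : ℤ)).toNat : ℤ) = n % (P : ℤ) :=
    Int.toNat_of_nonneg (Int.emod_nonneg n (by exact_mod_cast hP.ne'))
  rw [zpi_congr f h1 x, zpi_add, zpi_mul_fixed f hPfix, ← zpi_natCast f, h2]

lemma zpi_emod_lt {P : ℕ} (hP : 0 < P) (n : ℤ) : (n % (P : ℤ)).toNat < P := by
  have := Int.emod_lt_of_pos n (b := (P : ℤ)) (by exact_mod_cast hP)
  omega

/-- two points with a common period whose orbits stay `e`-close over a full period are equal -/
lemma eq_of_orbit_close (f : X ≃ₜ X) {e : ℝ}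
    (hexp : ∀ x y : X, x ≠ y → ∃ n : ℤ, e < dist (zpowIter f n x) (zpowIter f n y))
    {x y : X} {P : ℕ} (hP : 0 < P)
    (hx : (⇑f)^[P] x = x) (hy : (⇑f)^[P] y = y)
    (hcl : ∀ m, m < P → dist ((⇑f)^[m] x) ((⇑f)^[m] y) ≤ e) : x = y := by
  by_contra hne
  obtain ⟨n, hn⟩ := hexp x y hne
  rw [zpi_emod f hP hx n, zpi_emod f hP hy n] at hn
  exact absurd hn (not_lt.mpr (hcl _ (zpi_emod_lt hP n)))

lemma commute_iter {f h : X ≃ₜ X} (hcomm : ⇑h ∘ ⇑f = ⇑f ∘ ⇑h) (j : ℕ) (x : X) :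
    h ((⇑f)^[j] x) = (⇑f)^[j] (h x) := by
  induction j with
  | zero => simp
  | succ j ih =>
      rw [Function.iterate_succ_apply', Function.iterate_succ_apply']
      calc h (f ((⇑f)^[j] x)) = f (h ((⇑f)^[j] x)) := congrFun hcomm _
        _ = f ((⇑f)^[j] (h x)) := by rw [ih]

lemma iter_zpi (f : X ≃ₜ X) (c : ℤ) (t : ℕ) (x : X) :
    (⇑f)^[t] (zpowIter f c x) = zpowIter f ((t : ℤ) + c) x := by
  rw [zpi_add, zpi_natCast]

lemma zpi_iter_fix (f : X ≃ₜ X) {P : ℕ} {q : X} (hq : (⇑f)^[P] q = q) (c : ℤ) :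
    (⇑f)^[P] (zpowIter f c q) = zpowIter f c q := by
  rw [iter_zpi, zpi_congr f (show (P : ℤ) + c = c + (P : ℤ) by ring), zpi_add, zpi_natCast, hq]

lemma per_dense (f : X ≃ₜ X) (hglue : PeriodicGluing f) (x : X) {ε : ℝ} (hε : 0 < ε) :
    ∃ z : X, IsPer f z ∧ dist z x < ε := by
  obtain ⟨K, hK, H⟩ := hglue ε hε
  obtain ⟨p, z, hp, hsh, hper⟩ := H 0 (fun _ => x) (fun _ => 1) (fun i _ => le_refl 1)
  refine ⟨z, ⟨1 + p 0, by omega, by simpa using hper⟩, by simpa using hsh 0 le_rfl 0 (by norm_num)⟩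

lemma zpi_continuous (f : X ≃ₜ X) (k : ℤ) : Continuous (zpowIter f k) := by
  rcases k with m | m
  · have hh : zpowIter f (Int.ofNat m) = (⇑f)^[m] := by
      funext x; exact zpi_natCast f m x
    rw [hh]; exact f.continuous.iterate m
  · have hh : zpowIter f (Int.negSucc m) = (⇑f.symm)^[m + 1] := by
      funext x
      show ⇑(f.toEquiv ^ Int.negSucc m) x = _
      rw [zpow_negSucc, ← inv_pow, Equiv.Perm.coe_pow]
      rfl
    rw [hh]; exact f.symm.continuous.iterate _

/-- Key gluing lemma: a single integer power of `f` realizes `h` on any finite family of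
periodic points. -/
lemma key_glue (f h : X ≃ₜ X) {e : ℝ} (he : 0 < e)
    (hexp : ∀ x y : X, x ≠ y → ∃ n : ℤ, e < dist (zpowIter f n x) (zpowIter f n y))
    (hglue : PeriodicGluing f)
    (hcomm : ⇑h ∘ ⇑f = ⇑f ∘ ⇑h) (n : X → ℤ)
    (hn : ∀ p : X, IsPer f p → h p = zpowIter f (n p) p)
    {N : ℕ} (hb : ∀ p : X, IsPer f p → |n p| ≤ (N : ℤ))
    (m : ℕ) (x : ℕ → X) (hx : ∀ i, i ≤ m → IsPer f (x i)) :
    ∃ k : ℤ, |k| ≤ (N : ℤ) ∧ ∀ i, i ≤ m → zpowIter f k (x i) = h (x i) := by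
  -- uniform continuity of h
  have hu := CompactSpace.uniformContinuous_of_continuous h.continuous
  rw [Metric.uniformContinuous_iff] at hu
  obtain ⟨δ₁, hδ₁, hδh⟩ := hu (e / 2) (by positivity)
  set δ := min δ₁ (e / 2) with hδdef
  have hδ : 0 < δ := lt_min hδ₁ (by positivity)
  obtain ⟨K, hK, H⟩ := hglue δ hδ
  set π : ℕ → ℕ := fun i => Function.minimalPeriod ⇑f (x i) with hπdef
  have hπ : ∀ i, i ≤ m → 0 < π i := by
    intro i hi
    obtain ⟨c, hc, hfc⟩ := hx i hi
    exact Function.IsPeriodicPt.minimalPeriod_pos hc hfc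
  have hπfix : ∀ i, i ≤ m → (⇑f)^[π i] (x i) = x i := fun i _ =>
    Function.iterate_minimalPeriod
  set nseg : ℕ → ℕ := fun i => (N + 1) * π i + N with hnsegdef
  have h1 : ∀ i, i ≤ m → 1 ≤ nseg i := by
    intro i hi
    have h2 := hπ i hi
    have h3 : 1 * 1 ≤ (N + 1) * π i := Nat.mul_le_mul (by omega) h2
    simp only [nseg]; omega
  obtain ⟨p, z, _hp, hsh, hper⟩ := H m x nseg h1
  set P := ∑ l ∈ Finset.range (m + 1), (nseg l + p l) with hPdef
  have hPpos : 0 < P := by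
    apply Finset.sum_pos
    · intro l hl
      have : l ≤ m := by simpa [Nat.lt_succ_iff] using hl
      have := h1 l this
      omega
    · exact ⟨0, Finset.mem_range.mpr (by omega)⟩
  have hzper : IsPer f z := ⟨P, hPpos, hper⟩
  have hzN := hb z hzper
  have hzh := hn z hzper
  refine ⟨n z, hzN, fun i hi => ?_⟩
  set q := x i with hqdef
  have hqper := hx i hi
  have hq : h q = zpowIter f (n q) q := hn q hqper
  have hqfix : (⇑f)^[π i] q = q := hπfix i hi
  have hπi : 0 < π i := hπ i hi
  rw [hq]
  -- periodicity of the two points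
  have hNπfix : (⇑f)^[N * π i] q = q := by
    rw [mul_comm, Function.iterate_mul]
    exact Function.iterate_fixed hqfix N
  have hNπfixz : zpowIter f ((N * π i : ℕ) : ℤ) q = q := by rw [zpi_natCast]; exact hNπfix
  apply eq_of_orbit_close f hexp hπi (zpi_iter_fix f hqfix _) (zpi_iter_fix f hqfix _)
  intro mm hmm
  set o := ∑ l ∈ Finset.range i, (nseg l + p l) with hodef
  set j := mm + N * π i with hjdef
  have habs := abs_le.mp hzN
  have hmul : (N + 1) * π i = N * π i + π i := by ring
  have hjle : j + N ≤ nseg i := by simp only [j, nseg]; omega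
  -- first estimate: image under h of the shadowing at time j
  have S1 : dist ((⇑f)^[j + o] z) ((⇑f)^[j] q) < δ₁ :=
    lt_of_lt_of_le (hsh i hi j (by omega)) (min_le_left _ _)
  have S2 : dist (h ((⇑f)^[j + o] z)) (h ((⇑f)^[j] q)) < e / 2 := hδh S1
  have hA : h ((⇑f)^[j + o] z) = zpowIter f (((j : ℤ) + o) + n z) z := by
    rw [commute_iter hcomm, hzh, iter_zpi]
    exact zpi_congr f (by push_cast; ring) z
  have hB : h ((⇑f)^[j] q) = zpowIter f ((j : ℤ) + n q) q := by
    rw [commute_iter hcomm, hq, iter_zpi]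
  rw [hA, hB] at S2
  -- second estimate: shadowing at time j + n z
  set j2 := ((j : ℤ) + n z).toNat with hj2def
  have hj2 : (j2 : ℤ) = (j : ℤ) + n z := by
    apply Int.toNat_of_nonneg
    have : (N : ℤ) ≤ (j : ℤ) := by
      have : N ≤ j := by simp only [j]; nlinarith [hπi]
      exact_mod_cast this
    linarith [habs.1]
  have hj2le : j2 ≤ nseg i := by
    have h4 : (j2 : ℤ) ≤ ((j + N : ℕ) : ℤ) := by push_cast; linarith [habs.2, hj2]
    have h5 : j2 ≤ j + N := by exact_mod_cast h4
    omega
  have S3 : dist ((⇑f)^[j2 + o] z) ((⇑f)^[j2] q) < e / 2 :=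
    lt_of_lt_of_le (hsh i hi j2 hj2le) (min_le_right _ _)
  have hC : (⇑f)^[j2 + o] z = zpowIter f (((j : ℤ) + o) + n z) z := by
    rw [← zpi_natCast f]
    exact zpi_congr f (by push_cast [hj2]; ring) z
  have hD : (⇑f)^[j2] q = zpowIter f ((j : ℤ) + n z) q := by
    rw [← zpi_natCast f]
    exact zpi_congr f (by rw [hj2]) q
  rw [hC, hD] at S3
  -- combine
  have Tri : dist (zpowIter f ((j : ℤ) + n z) q) (zpowIter f ((j : ℤ) + n q) q) < e := by
    calc dist (zpowIter f ((j : ℤ) + n z) q) (zpowIter f ((j : ℤ) + n q) q)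
        ≤ dist (zpowIter f ((j : ℤ) + n z) q) (zpowIter f (((j : ℤ) + o) + n z) z)
          + dist (zpowIter f (((j : ℤ) + o) + n z) z) (zpowIter f ((j : ℤ) + n q) q) :=
          dist_triangle _ _ _
      _ < e / 2 + e / 2 := by
          rw [dist_comm (zpowIter f ((j : ℤ) + n z) q)]
          exact add_lt_add S3 S2
      _ = e := by ring
  -- rewrite the goal points in terms of time j
  have hE : (⇑f)^[mm] (zpowIter f (n z) q) = zpowIter f ((j : ℤ) + n z) q := by
    rw [iter_zpi]
    refine Eq.symm ?_
    calc zpowIter f ((j : ℤ) + n z) q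
        = zpowIter f (((mm : ℤ) + n z) + ((N * π i : ℕ) : ℤ)) q :=
          zpi_congr f (by simp only [j]; push_cast; ring) q
      _ = zpowIter f ((mm : ℤ) + n z) (zpowIter f ((N * π i : ℕ) : ℤ) q) := zpi_add f _ _ q
      _ = zpowIter f ((mm : ℤ) + n z) q := by rw [hNπfixz]
  have hF : (⇑f)^[mm] (zpowIter f (n q) q) = zpowIter f ((j : ℤ) + n q) q := by
    rw [iter_zpi]
    refine Eq.symm ?_
    calc zpowIter f ((j : ℤ) + n q) q
        = zpowIter f (((mm : ℤ) + n q) + ((N * π i : ℕ) : ℤ)) q :=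
          zpi_congr f (by simp only [j]; push_cast; ring) q
      _ = zpowIter f ((mm : ℤ) + n q) (zpowIter f ((N * π i : ℕ) : ℤ) q) := zpi_add f _ _ q
      _ = zpowIter f ((mm : ℤ) + n q) q := by rw [hNπfixz]
  rw [hE, hF]
  exact le_of_lt Tri

/-- If the displacement function `n(·)` (with `h p = f^{n p} p` and
`n p ∈ (-π(p)/2, π(p)/2]` on periodic points) is bounded, then `h` is a power of `f`. -/
theorem bounded_displacement_implies_power
    (f h : X ≃ₜ X) (hexp : Expansive f) (hglue : PeriodicGluing f)
    (hcomm : ⇑h ∘ ⇑f = ⇑f ∘ ⇑h) (n : X → ℤ)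
    (hn : ∀ p : X, IsPer f p → h p = zpowIter f (n p) p ∧
      -(Function.minimalPeriod ⇑f p : ℤ) < 2 * n p ∧
        2 * n p ≤ (Function.minimalPeriod ⇑f p : ℤ))
    (hbd : ∃ N : ℕ, ∀ p : X, IsPer f p → |n p| ≤ (N : ℤ)) :
    ∃ k : ℤ, ⇑h = zpowIter f k := by
  obtain ⟨e, he, hexp'⟩ := hexp
  obtain ⟨N, hb⟩ := hbd
  by_cases hgood : ∃ k : ℤ, ∀ p : X, IsPer f p → zpowIter f k p = h p
  · obtain ⟨k, hk⟩ := hgood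
    refine ⟨k, ?_⟩
    funext y
    have hc1 : Continuous (zpowIter f k) := zpi_continuous f k
    have hsmall : ∀ ε : ℝ, 0 < ε → dist (h y) (zpowIter f k y) < ε := by
      intro ε hε
      obtain ⟨δ₁, hδ₁, H1⟩ := Metric.continuous_iff.mp h.continuous y (ε / 2) (by positivity)
      obtain ⟨δ₂, hδ₂, H2⟩ := Metric.continuous_iff.mp hc1 y (ε / 2) (by positivity)
      obtain ⟨q, hqper, hqd⟩ := per_dense f hglue y (lt_min hδ₁ hδ₂)
      have e1 : dist (h q) (h y) < ε / 2 := H1 q (lt_of_lt_of_le hqd (min_le_left _ _))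
      have e2 : dist (zpowIter f k q) (zpowIter f k y) < ε / 2 :=
        H2 q (lt_of_lt_of_le hqd (min_le_right _ _))
      have e3 : h q = zpowIter f k q := (hk q hqper).symm
      calc dist (h y) (zpowIter f k y)
          ≤ dist (h y) (h q) + dist (h q) (zpowIter f k y) := dist_triangle _ _ _
        _ = dist (h q) (h y) + dist (zpowIter f k q) (zpowIter f k y) := by
            rw [dist_comm, e3]
        _ < ε / 2 + ε / 2 := add_lt_add e1 e2
        _ = ε := by ring
    by_contra hne
    exact lt_irrefl _ (hsmall _ (dist_pos.mpr hne))
  · exfalso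
    push_neg at hgood
    choose w hw1 hw2 using hgood
    obtain ⟨k, hkN, hkall⟩ := key_glue f h he hexp' hglue hcomm n
      (fun p hp => (hn p hp).1) hb (2 * N) (fun i => w ((i : ℤ) - N))
      (fun i _ => hw1 _)
    have habs := abs_le.mp hkN
    set i := (k + N).toNat with hidef
    have hi : i ≤ 2 * N := by omega
    have hik : ((i : ℤ) - N) = k := by omega
    have hcontra := hkall i hi
    rw [hik] at hcontra
    exact hw2 k hcontra
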